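/- Let D be an acyclic oriented graph with underlying undirected graph G, and let g ∈ ℕ. Then χ(G) ≤ T_g(χ(L^g(D))), where T_0(x) = x and T_{i+1}(x) = 2^{T_i(x)}; equivalently, χ(L^g(D)) is at least the g-fold iterated base-2 logarithm of χ(G). -/

import Mathlib

open SimpleGraph

/-- The shift graph `G_{n,2}`: vertices are pairs `(i,j)` with `i < j` in `Fin n`,
and `(i,j)` is adjacent to `(k,l)` iff `j = k` or `l = i`. -/
def ShiftGraph (n : ℕ) : SimpleGraph {p : Fin n × Fin n // p.1 < p.2} :=
  SimpleGraph.fromRel (fun p q => p.1.2 = q.1.1)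

/-- The arcs of a digraph `D`. -/
def Arcs {V : Type} (D : V → V → Prop) : Type := {e : V × V // D e.1 e.2}

/-- The line digraph `L⃗(D)`: there is an arc from `(a,b)` to `(c,d)` iff `b = c`. -/
def LineDigraph {V : Type} (D : V → V → Prop) : Arcs D → Arcs D → Prop :=
  fun e f => e.1.2 = f.1.1

/-- The underlying undirected (simple) graph of a digraph. -/
def UG {V : Type} (D : V → V → Prop) : SimpleGraph V := SimpleGraph.fromRel D

/-- The undirected line graph `L(D)`: the underlying undirected graph of the line digraph,
in which two arcs are adjacent iff the head of one equals the tail of the other. -/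
def LineGraph {V : Type} (D : V → V → Prop) : SimpleGraph (Arcs D) :=
  UG (LineDigraph D)

/-- A digraph is an oriented graph if its arc relation is irreflexive and between any
two vertices at most one of the two opposite arcs is present. -/
def Oriented {V : Type} (D : V → V → Prop) : Prop :=
  Irreflexive D ∧ ∀ a b, D a b → ¬ D b a

/-- A digraph is acyclic if it contains no directed cycle, equivalently no vertex is
reachable from itself by a nonempty directed walk. -/
def DigraphAcyclic {V : Type} (D : V → V → Prop) : Prop :=
  ∀ v, ¬ Relation.TransGen D v v

/-- The iterated line digraph: `(IterLine V D g).1` is the vertex type of `L⃗^g(D)` and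
`(IterLine V D g).2` is its arc relation. -/
def IterLine (V : Type) (D : V → V → Prop) : ℕ → (W : Type) × (W → W → Prop)
  | 0 => ⟨V, D⟩
  | g + 1 => ⟨Arcs (IterLine V D g).2, LineDigraph (IterLine V D g).2⟩

/-- `l` is (the list of vertices of) a directed path from `x` to `y` in the digraph `D`:
consecutive vertices are joined by arcs, the vertices are pairwise distinct, and the
list starts at `x` and ends at `y`. -/
def IsDipath {V : Type} (D : V → V → Prop) (x y : V) (l : List V) : Prop :=
  l.Chain' D ∧ l.head? = some x ∧ l.getLast? = some y ∧ l.Nodup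

/-- A digraph has at most one directed path from any vertex to any other vertex. -/
def UniqueDipaths {V : Type} (D : V → V → Prop) : Prop :=
  ∀ x y l₁ l₂, IsDipath D x y l₁ → IsDipath D x y l₂ → l₁ = l₂

/-- `D` is an orientation of the simple graph `G`. -/
def IsOrientationOf {V : Type} (G : SimpleGraph V) (D : V → V → Prop) : Prop :=
  (∀ a b, D a b → G.Adj a b) ∧ (∀ a b, G.Adj a b → (D a b ∨ D b a)) ∧
    (∀ a b, D a b → ¬ D b a)

/-- A simple graph has the AOP property if it admits an acyclic orientation with at most
one directed path between any ordered pair of vertices. -/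
def HasAOP {V : Type} (G : SimpleGraph V) : Prop :=
  ∃ D : V → V → Prop, IsOrientationOf G D ∧ DigraphAcyclic D ∧ UniqueDipaths D

/-- The tower function: `Tower g x` is `2^(2^(⋯^x))` with `g` twos. -/
def Tower : ℕ → ℕ → ℕ
  | 0, x => x
  | i + 1, x => 2 ^ Tower i x

/-- The graph `G` has degeneracy at most `k`: every nonempty (induced subgraph on a) set
of vertices contains a vertex with at most `k` neighbours inside the set. -/
def DegenLE {V : Type} (G : SimpleGraph V) (k : ℕ) : Prop :=
  ∀ s : Set V, s.Nonempty → ∃ v ∈ s, ({u ∈ s | G.Adj v u} : Set V).ncard ≤ k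

lemma lineDigraph_irrefl {V : Type} {D : V → V → Prop} (h : Irreflexive D) :
    Irreflexive (LineDigraph D) := by
  intro e he
  have := e.2
  rw [he] at this
  exact h _ this

lemma iterLine_irrefl {V : Type} {D : V → V → Prop} (h : Irreflexive D) (g : ℕ) :
    Irreflexive (IterLine V D g).2 := by
  induction g with
  | zero => exact h
  | succ g ih => exact lineDigraph_irrefl ih

lemma step_lemma {V : Type} (D : V → V → Prop) (k : ℕ)
    (h : (UG (LineDigraph D)).Colorable k) : (UG D).Colorable (2 ^ k) := by
  classical
  obtain ⟨c⟩ := h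
  let col : V → Finset (Fin k) := fun v =>
    Finset.univ.filter (fun x => ∃ e : Arcs D, e.1.1 = v ∧ c e = x)
  have hmem : ∀ (a b : V) (hab : D a b), c ⟨(a, b), hab⟩ ∈ col a := by
    intro a b hab
    simp only [col, Finset.mem_filter, Finset.mem_univ, true_and]
    exact ⟨⟨(a, b), hab⟩, rfl, rfl⟩
  have hnot : ∀ (a b : V) (hab : D a b), a ≠ b → c ⟨(a, b), hab⟩ ∉ col b := by
    intro a b hab hne hm
    simp only [col, Finset.mem_filter, Finset.mem_univ, true_and] at hm
    obtain ⟨f, hf1, hf2⟩ := hm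
    have hadj : (UG (LineDigraph D)).Adj ⟨(a, b), hab⟩ f := by
      refine (SimpleGraph.fromRel_adj ..).mpr ?_
      refine ⟨?_, Or.inl hf1.symm⟩
      intro hef
      apply hne
      have : f.1.1 = a := by rw [← hef]
      rw [← this, hf1]
    exact c.valid hadj hf2.symm
  have hcol : (UG D).Colorable (Fintype.card (Finset (Fin k))) := by
    apply SimpleGraph.Coloring.colorable
    refine SimpleGraph.Coloring.mk col ?_
    intro v w hadj
    rw [UG, SimpleGraph.fromRel_adj] at hadj
    obtain ⟨hne, hd | hd⟩ := hadj
    · intro heq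
      exact hnot v w hd hne (heq ▸ hmem v w hd)
    · intro heq
      exact hnot w v hd hne.symm (heq ▸ hmem w v hd)
  simpa [Fintype.card_finset] using hcol

lemma tower_shift (g k : ℕ) : Tower g (2 ^ k) = Tower (g + 1) k := by
  induction g with
  | zero => rfl
  | succ g ih => show 2 ^ Tower g (2 ^ k) = 2 ^ Tower (g + 1) k; rw [ih]

theorem stmt_7 {V : Type} [Fintype V] (D : V → V → Prop) (hor : Oriented D)
    (hacyc : DigraphAcyclic D) (g k : ℕ)
    (h : (UG (IterLine V D g).2).Colorable k) :
    (UG D).Colorable (Tower g k) := by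
  induction g generalizing k with
  | zero => exact h
  | succ g ih =>
    have h' : (UG (LineDigraph (IterLine V D g).2)).Colorable k := h
    have := ih (2 ^ k) (step_lemma _ _ h')
    rwa [tower_shift] at this
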